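/- Let n be a natural number, let f : ℝⁿ → ℝⁿ be continuous, let X_I and X_U be subsets of ℝⁿ, and let B : ℝⁿ → ℝ be continuously differentiable. Suppose (i) B(x) ≤ 0 for every x ∈ X_I, (ii) B(x) > 0 for every x ∈ X_U, and (iii) ⟨∇B(y), f(y)⟩ < 0 for every y ∈ ℝⁿ with B(y) = 0. Then the continuous-time system is safe: for every differentiable solution x : ℝ → ℝⁿ with x'(t) = f(x(t)) for all t ≥ 0 and x(0) ∈ X_I, one has x(t) ∉ X_U for all t ≥ 0. -/

import Mathlib

open InnerProductSpace Set Filter Topology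

theorem continuous_barrier_safety (n : ℕ)
    (f : EuclideanSpace ℝ (Fin n) → EuclideanSpace ℝ (Fin n))
    (hf : Continuous f)
    (X_I X_U : Set (EuclideanSpace ℝ (Fin n)))
    (B : EuclideanSpace ℝ (Fin n) → ℝ)
    (hB : ContDiff ℝ 1 B)
    (hInit : ∀ x ∈ X_I, B x ≤ 0)
    (hUnsafe : ∀ x ∈ X_U, 0 < B x)
    (hLie : ∀ y : EuclideanSpace ℝ (Fin n), B y = 0 →
      (inner ℝ (gradient B y) (f y) : ℝ) < 0) :
    ∀ x : ℝ → EuclideanSpace ℝ (Fin n), Differentiable ℝ x →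
      (∀ t : ℝ, 0 ≤ t → deriv x t = f (x t)) → x 0 ∈ X_I →
      ∀ t : ℝ, 0 ≤ t → x t ∉ X_U := by
  intro x hx hode hx0 t ht hxt
  set g : ℝ → ℝ := fun u => B (x u) with hg
  have hgc : Continuous g := (hB.continuous).comp hx.continuous
  -- derivative of g
  have hgderiv : ∀ s : ℝ, 0 ≤ s →
      HasDerivAt g (inner ℝ (gradient B (x s)) (f (x s)) : ℝ) s := by
    intro s hs
    have h1 : HasDerivAt x (f (x s)) s := by
      have := (hx s).hasDerivAt
      rwa [hode s hs] at this
    have h2 : HasGradientAt B (gradient B (x s)) (x s) :=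
      (hB.differentiable one_ne_zero (x s)).hasGradientAt
    have h3 := h2.hasFDerivAt.comp_hasDerivAt s h1
    have h4 : HasDerivAt g ((toDual ℝ (EuclideanSpace ℝ (Fin n))) (gradient B (x s)) (f (x s))) s := h3
    simpa using h4
  have hgt : 0 < g t := hUnsafe _ hxt
  have hg0 : g 0 ≤ 0 := hInit _ hx0
  set S : Set ℝ := {u | u ∈ Icc 0 t ∧ g u ≤ 0} with hS
  have hSne : S.Nonempty := ⟨0, ⟨le_rfl, ht⟩, hg0⟩
  have hSbdd : BddAbove S := ⟨t, fun u hu => hu.1.2⟩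
  have hSclosed : IsClosed S :=
    (isClosed_Icc).inter (isClosed_le hgc continuous_const)
  set s := sSup S with hs_def
  have hsS : s ∈ S := hSclosed.csSup_mem hSne hSbdd
  have hs0 : 0 ≤ s := hsS.1.1
  have hst : s ≤ t := hsS.1.2
  have hsne : s ≠ t := fun h => absurd hgt (by simpa [h] using not_lt.2 hsS.2)
  have hslt : s < t := lt_of_le_of_ne hst hsne
  have hpos : ∀ u ∈ Ioc s t, 0 < g u := by
    intro u hu
    by_contra h
    push_neg at h
    have : u ∈ S := ⟨⟨hs0.trans hu.1.le, hu.2⟩, h⟩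
    exact absurd (le_csSup hSbdd this) (not_le.2 hu.1)
  -- g s = 0
  have hgs : g s = 0 := by
    rcases lt_or_eq_of_le hsS.2 with hlt | h
    · exfalso
      have hev : ∀ᶠ u in 𝓝[>] s, g u < 0 :=
        ((hgc.continuousAt.eventually_lt continuousAt_const hlt)).filter_mono
          nhdsWithin_le_nhds
      have hioc : Ioc s t ∈ 𝓝[>] s := Ioc_mem_nhdsGT_of_mem ⟨le_rfl, hslt⟩
      rcases (hev.and (eventually_of_mem hioc (fun u hu => hu))).exists with ⟨u, hu1, hu2⟩
      exact absurd (hpos u hu2) (not_lt.2 hu1.le)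
    · exact h
  -- derivative negative at s
  have hd : HasDerivAt g (inner ℝ (gradient B (x s)) (f (x s)) : ℝ) s := hgderiv s hs0
  have hdneg : (inner ℝ (gradient B (x s)) (f (x s)) : ℝ) < 0 := hLie _ hgs
  -- slope eventually negative, but g u > 0 for u > s
  have hslope := hasDerivAt_iff_tendsto_slope.1 hd
  have hev2 : ∀ᶠ u in 𝓝[≠] s, slope g s u < 0 :=
    hslope.eventually (eventually_lt_nhds hdneg)
  have hev3 : ∀ᶠ u in 𝓝[>] s, slope g s u < 0 :=
    hev2.filter_mono (nhdsWithin_mono s (fun u hu => ne_of_gt hu))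
  have hioc : Ioc s t ∈ 𝓝[>] s := Ioc_mem_nhdsGT_of_mem ⟨le_rfl, hslt⟩
  rcases (hev3.and (eventually_of_mem hioc (fun u hu => hu))).exists with ⟨u, hu1, hu2⟩
  have : 0 < slope g s u := by
    rw [slope_def_field]
    exact div_pos (by rw [hgs]; simpa using hpos u hu2) (sub_pos.2 hu2.1)
  exact absurd hu1 (not_lt.2 this.le)
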